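/- arXiv:2411.19864 — 6 statements merged into one kernel-verified Lean document; each statement's English description precedes it below -/
import Mathlib

section
/- For every α ∈ [0, π/4], if β ∈ [0, π/4] satisfies cos(2β) = (cos(2α))², then ∫₀^β 1/√(cos(2θ)) dθ = 2 · ∫₀^α 1/√(1 + (cos(2θ))²) dθ. -/
open Real Set

noncomputable def gsub (φ : ℝ) : ℝ := Real.arcsin (Real.sin (2 * φ) / Real.sqrt 2)

lemma abs_inner_lt (φ : ℝ) : |Real.sin (2 * φ) / Real.sqrt 2| < 1 := by
  rw [abs_div, abs_of_nonneg (Real.sqrt_nonneg 2)]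
  rw [div_lt_one (by positivity)]
  calc |Real.sin (2*φ)| ≤ 1 := Real.abs_sin_le_one _
    _ < Real.sqrt 2 := by
        nlinarith [Real.sq_sqrt (by norm_num : (2:ℝ) ≥ 0), Real.sqrt_nonneg 2]

lemma gsub_hasDerivAt (φ : ℝ) :
    HasDerivAt gsub (2 * Real.cos (2*φ) / Real.sqrt (1 + Real.cos (2*φ)^2)) φ := by
  have habs := abs_inner_lt φ
  have h₁ : Real.sin (2*φ) / Real.sqrt 2 ≠ -1 := by
    intro hh; rw [hh] at habs; norm_num at habs
  have h₂ : Real.sin (2*φ) / Real.sqrt 2 ≠ 1 := by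
    intro hh; rw [hh] at habs; norm_num at habs
  have hinner : HasDerivAt (fun φ : ℝ => Real.sin (2*φ) / Real.sqrt 2)
      (2 * Real.cos (2*φ) / Real.sqrt 2) φ := by
    have h1 : HasDerivAt (fun φ : ℝ => 2*φ) 2 φ := by
      simpa using (hasDerivAt_id φ).const_mul 2
    have := (Real.hasDerivAt_sin (2*φ)).comp φ h1
    simpa [mul_comm] using this.div_const (Real.sqrt 2)
  have := (Real.hasDerivAt_arcsin h₁ h₂).comp φ hinner
  refine this.congr_deriv ?_
  have hs2 : Real.sqrt 2 > 0 := by positivity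
  have key : Real.sqrt (1 + Real.cos (2*φ)^2)
      = Real.sqrt 2 * Real.sqrt (1 - (Real.sin (2*φ) / Real.sqrt 2)^2) := by
    rw [← Real.sqrt_mul (by norm_num : (0:ℝ) ≤ 2)]
    congr 1
    have hsq : (Real.sqrt 2)^2 = 2 := Real.sq_sqrt (by norm_num)
    have := Real.sin_sq_add_cos_sq (2*φ)
    field_simp
    nlinarith [this]
  rw [key, div_mul_div_comm, one_mul]
  ring

lemma cos_two_gsub (φ : ℝ) : Real.cos (2 * gsub φ) = (Real.cos (2*φ))^2 := by
  have habs := (abs_inner_lt φ).le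
  have h := abs_le.1 habs
  have hsin : Real.sin (gsub φ) = Real.sin (2*φ) / Real.sqrt 2 :=
    Real.sin_arcsin h.1 h.2
  have hcos2 : Real.cos (2 * gsub φ) = 1 - 2 * Real.sin (gsub φ)^2 := by
    rw [Real.cos_two_mul]
    nlinarith [Real.sin_sq_add_cos_sq (gsub φ)]
  rw [hcos2, hsin]
  have hsq : (Real.sqrt 2)^2 = 2 := Real.sq_sqrt (by norm_num)
  have := Real.sin_sq_add_cos_sq (2*φ)
  field_simp
  nlinarith [this]

lemma gsub_zero : gsub 0 = 0 := by simp [gsub]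

lemma gsub_pi_div_four : gsub (π/4) = π/4 := by
  have h2 : Real.sqrt 2 * Real.sqrt 2 = 2 := Real.mul_self_sqrt (by norm_num)
  have h : Real.sin (2 * (π/4)) / Real.sqrt 2 = Real.sin (π/4) := by
    rw [show 2 * (π/4) = π/2 by ring, Real.sin_pi_div_two, Real.sin_pi_div_four]
    field_simp
    rw [Real.sq_sqrt (by norm_num : (0:ℝ) ≤ 2)]
  have hpi := Real.pi_pos
  rw [gsub, h, Real.arcsin_sin (by linarith) (by linarith)]

lemma gsub_mono {a b : ℝ} (h0 : 0 ≤ a) (hab : a ≤ b) (hb : b ≤ π/4) : gsub a ≤ gsub b := by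
  have hpi := Real.pi_pos
  apply Real.monotone_arcsin
  gcongr
  exact Real.sin_le_sin_of_le_of_le_pi_div_two (by linarith) (by linarith) (by linarith)

lemma gsub_nonneg {a : ℝ} (h0 : 0 ≤ a) (ha : a ≤ π/4) : 0 ≤ gsub a := by
  rw [gsub, Real.arcsin_nonneg]
  have hpi := Real.pi_pos
  apply div_nonneg _ (Real.sqrt_nonneg 2)
  exact Real.sin_nonneg_of_nonneg_of_le_pi (by linarith) (by linarith)

lemma gsub_lt {a : ℝ} (h0 : 0 ≤ a) (ha : a < π/4) : gsub a < π/4 := by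
  have hpi := Real.pi_pos
  rw [← gsub_pi_div_four]
  unfold gsub
  apply Real.strictMonoOn_arcsin
  · constructor
    · apply le_trans (by norm_num : (-1:ℝ) ≤ 0)
      apply div_nonneg _ (Real.sqrt_nonneg 2)
      exact Real.sin_nonneg_of_nonneg_of_le_pi (by linarith) (by linarith)
    · exact (abs_le.1 (abs_inner_lt a).le).2
  · exact ⟨(abs_le.1 (abs_inner_lt (π/4)).le).1, (abs_le.1 (abs_inner_lt (π/4)).le).2⟩
  · gcongr
    exact Real.sin_lt_sin_of_lt_of_le_pi_div_two (by linarith) (by linarith) (by linarith)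

lemma key_subst {a : ℝ} (h0 : 0 ≤ a) (ha : a < π/4) :
    ∫ θ in (0:ℝ)..(gsub a), 1 / Real.sqrt (Real.cos (2 * θ)) =
      2 * ∫ θ in (0:ℝ)..a, 1 / Real.sqrt (1 + (Real.cos (2 * θ)) ^ 2) := by
  have hpi := Real.pi_pos
  set f' : ℝ → ℝ := fun φ => 2 * Real.cos (2*φ) / Real.sqrt (1 + Real.cos (2*φ)^2) with hf'
  have hcontf' : Continuous f' := by
    apply Continuous.div
    · fun_prop
    · fun_prop
    · intro x
      have : (0:ℝ) < 1 + Real.cos (2*x)^2 := by positivity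
      exact (Real.sqrt_pos.2 this).ne'
  have huIcc : Set.uIcc (0:ℝ) a = Set.Icc 0 a := Set.uIcc_of_le h0
  have himg : gsub '' Set.uIcc (0:ℝ) a ⊆ Set.Icc 0 (gsub a) := by
    rw [huIcc]
    rintro _ ⟨x, hx, rfl⟩
    exact ⟨gsub_nonneg hx.1 (hx.2.trans ha.le), gsub_mono hx.1 hx.2 ha.le⟩
  have hcospos : ∀ θ ∈ Set.Icc (0:ℝ) (gsub a), 0 < Real.cos (2*θ) := by
    intro θ hθ
    have h1 : gsub a < π/4 := gsub_lt h0 ha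
    apply Real.cos_pos_of_mem_Ioo
    constructor <;> [linarith [hθ.1]; linarith [hθ.2]]
  have hgcont : ContinuousOn (fun θ : ℝ => 1 / Real.sqrt (Real.cos (2*θ)))
      (gsub '' Set.uIcc (0:ℝ) a) := by
    apply ContinuousOn.mono _ himg
    apply ContinuousOn.div continuousOn_const
    · fun_prop
    · intro θ hθ
      exact (Real.sqrt_pos.2 (hcospos θ hθ)).ne'
  have hsub := intervalIntegral.integral_comp_smul_deriv'
    (f := gsub) (f' := f') (g := fun θ : ℝ => 1 / Real.sqrt (Real.cos (2*θ)))
    (a := 0) (b := a)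
    (fun x _ => gsub_hasDerivAt x) hcontf'.continuousOn hgcont
  rw [gsub_zero] at hsub
  rw [← hsub]
  have hcongr : Set.EqOn
      (fun x => f' x • ((fun θ : ℝ => 1 / Real.sqrt (Real.cos (2*θ))) ∘ gsub) x)
      (fun x => 2 * (1 / Real.sqrt (1 + Real.cos (2*x)^2))) (Set.uIcc (0:ℝ) a) := by
    rw [huIcc]
    intro x hx
    have hcx : 0 < Real.cos (2*x) := by
      apply Real.cos_pos_of_mem_Ioo
      constructor <;> [linarith [hx.1]; linarith [hx.2]]
    simp only [Function.comp, smul_eq_mul]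
    rw [cos_two_gsub, Real.sqrt_sq hcx.le]
    have hs : (0:ℝ) < Real.sqrt (1 + Real.cos (2*x)^2) := Real.sqrt_pos.2 (by positivity)
    simp only [hf']
    field_simp [hf']
  rw [intervalIntegral.integral_congr hcongr, intervalIntegral.integral_const_mul]

lemma intFL : IntervalIntegrable (fun θ : ℝ => 1 / Real.sqrt (Real.cos (2 * θ)))
    MeasureTheory.volume 0 (π/4) := by
  have hpi := Real.pi_pos
  have h1 : IntervalIntegrable (fun x : ℝ => x ^ (-(1/2) : ℝ)) MeasureTheory.volume (π/4) 0 :=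
    intervalIntegral.intervalIntegrable_rpow' (by norm_num)
  have h2 := (h1.comp_sub_left (π/4)).const_mul (Real.sqrt π / 2)
  simp only [sub_self, sub_zero] at h2
  apply h2.mono_fun'
  · refine Measurable.aestronglyMeasurable (Measurable.div measurable_const ?_)
    exact (Real.continuous_sqrt.comp (Real.continuous_cos.comp
      (continuous_const.mul continuous_id))).measurable
  · filter_upwards [MeasureTheory.ae_restrict_mem measurableSet_uIoc] with θ hθ
    rw [Set.uIoc_of_le (by positivity)] at hθ
    have hnn : (0:ℝ) ≤ 1 / Real.sqrt (Real.cos (2*θ)) := by positivity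
    rw [Real.norm_eq_abs, abs_of_nonneg hnn]
    rcases eq_or_lt_of_le hθ.2 with hq | hq
    · rw [hq]
      rw [show 2 * (π/4) = π/2 by ring, Real.cos_pi_div_two, Real.sqrt_zero, div_zero]
      rw [sub_self, Real.zero_rpow (by norm_num)]
      simp
    · set t := π/4 - θ with htdef
      have ht : 0 < t := by simp [htdef]; linarith
      have hcos : 4/π * t ≤ Real.cos (2*θ) := by
        rw [← Real.sin_pi_div_two_sub]
        have := Real.mul_le_sin (x := π/2 - 2*θ) (by linarith [hθ.1]) (by linarith [hθ.1])
        calc 4/π * t = 2/π * (π/2 - 2*θ) := by rw [htdef]; ring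
          _ ≤ _ := this
      have hπs : (0:ℝ) < Real.sqrt π := Real.sqrt_pos.2 hpi
      have hπ2 : Real.sqrt π ^ 2 = π := Real.sq_sqrt hpi.le
      have hts : (0:ℝ) < Real.sqrt t := Real.sqrt_pos.2 ht
      have hkey : 2 / Real.sqrt π * Real.sqrt t ≤ Real.sqrt (Real.cos (2*θ)) := by
        have : 2 / Real.sqrt π * Real.sqrt t = Real.sqrt ((2 / Real.sqrt π * Real.sqrt t)^2) :=
          (Real.sqrt_sq (by positivity)).symm
        rw [this]
        apply Real.sqrt_le_sqrt
        have hts2 : Real.sqrt t ^ 2 = t := Real.sq_sqrt ht.le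
        calc (2 / Real.sqrt π * Real.sqrt t)^2 = 4 / (Real.sqrt π)^2 * (Real.sqrt t)^2 := by ring
          _ = 4/π * t := by rw [hπ2, hts2]
          _ ≤ _ := hcos
      have hrp : t ^ (-(1/2):ℝ) = (Real.sqrt t)⁻¹ := by
        rw [Real.rpow_neg ht.le, ← Real.sqrt_eq_rpow]
      rw [hrp]
      calc 1 / Real.sqrt (Real.cos (2*θ)) ≤ 1 / (2 / Real.sqrt π * Real.sqrt t) := by
            apply one_div_le_one_div_of_le (by positivity) hkey
        _ = Real.sqrt π / 2 * (Real.sqrt t)⁻¹ := by field_simp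

theorem lemniscate_arc_eq_twice_squircle_area
    (α β : ℝ) (hα : α ∈ Set.Icc 0 (π / 4)) (hβ : β ∈ Set.Icc 0 (π / 4))
    (h : Real.cos (2 * β) = (Real.cos (2 * α)) ^ 2) :
    ∫ θ in (0:ℝ)..β, 1 / Real.sqrt (Real.cos (2 * θ)) =
      2 * ∫ θ in (0:ℝ)..α, 1 / Real.sqrt (1 + (Real.cos (2 * θ)) ^ 2) := by
  have hpi := Real.pi_pos
  obtain ⟨hα0, hα4⟩ := hα
  obtain ⟨hβ0, hβ4⟩ := hβ
  -- β = gsub α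
  have hg4 : gsub α ≤ π/4 := by
    rw [← gsub_pi_div_four]; exact gsub_mono hα0 hα4 le_rfl
  have hg0 : 0 ≤ gsub α := gsub_nonneg hα0 hα4
  have hβeq : β = gsub α := by
    have hc : Real.cos (2*β) = Real.cos (2 * gsub α) := by rw [h, cos_two_gsub]
    have := Real.injOn_cos (Set.mem_Icc.2 ⟨by linarith, by linarith⟩)
      (Set.mem_Icc.2 ⟨by linarith, by linarith⟩) hc
    linarith
  subst hβeq
  rcases lt_or_eq_of_le hα4 with hlt | heq
  · exact key_subst hα0 hlt
  · subst heq
    -- limit argument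
    have hint : MeasureTheory.IntegrableOn (fun θ : ℝ => 1 / Real.sqrt (Real.cos (2 * θ)))
        (Set.uIcc (0:ℝ) (π/4)) MeasureTheory.volume := by
      rw [Set.uIcc_of_le (by positivity)]
      exact (intervalIntegrable_iff_integrableOn_Icc_of_le (by positivity)).1 intFL
    have hLc : ContinuousOn (fun x => ∫ θ in (0:ℝ)..x, 1 / Real.sqrt (Real.cos (2 * θ)))
        (Set.Icc 0 (π/4)) := by
      have := intervalIntegral.continuousOn_primitive_interval hint
      rwa [Set.uIcc_of_le (by positivity)] at this
    have hfScont : Continuous (fun θ : ℝ => 1 / Real.sqrt (1 + (Real.cos (2 * θ)) ^ 2)) := by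
      apply Continuous.div continuous_const
      · fun_prop
      · intro x
        exact (Real.sqrt_pos.2 (by positivity)).ne'
    have hSc : Continuous (fun x => ∫ θ in (0:ℝ)..x, 1 / Real.sqrt (1 + (Real.cos (2 * θ)) ^ 2)) :=
      intervalIntegral.continuous_primitive (fun a b => hfScont.intervalIntegrable a b) 0
    have hgc : Continuous gsub := Real.continuous_arcsin.comp (by fun_prop)
    have hmaps : Set.MapsTo gsub (Set.Icc 0 (π/4)) (Set.Icc 0 (π/4)) := fun x hx =>
      ⟨gsub_nonneg hx.1 hx.2, by rw [← gsub_pi_div_four]; exact gsub_mono hx.1 hx.2 le_rfl⟩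
    have hFc : ContinuousOn
        (fun a => ∫ θ in (0:ℝ)..(gsub a), 1 / Real.sqrt (Real.cos (2 * θ)))
        (Set.Icc 0 (π/4)) := hLc.comp hgc.continuousOn hmaps
    have hmem : (π/4 : ℝ) ∈ Set.Icc (0:ℝ) (π/4) := ⟨by positivity, le_rfl⟩
    have hne : (nhdsWithin (π/4 : ℝ) (Set.Ico 0 (π/4))).NeBot := by
      apply mem_closure_iff_nhdsWithin_neBot.1
      rw [closure_Ico (by positivity : (0:ℝ) ≠ π/4)]
      exact hmem
    have hF : Filter.Tendsto
        (fun a => ∫ θ in (0:ℝ)..(gsub a), 1 / Real.sqrt (Real.cos (2 * θ)))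
        (nhdsWithin (π/4) (Set.Ico 0 (π/4)))
        (nhds (∫ θ in (0:ℝ)..(gsub (π/4)), 1 / Real.sqrt (Real.cos (2 * θ)))) :=
      ((hFc (π/4) hmem).mono (Set.Ico_subset_Icc_self.trans Set.Subset.rfl)).tendsto
    have hG : Filter.Tendsto
        (fun a => 2 * ∫ θ in (0:ℝ)..a, 1 / Real.sqrt (1 + (Real.cos (2 * θ)) ^ 2))
        (nhdsWithin (π/4) (Set.Ico 0 (π/4)))
        (nhds (2 * ∫ θ in (0:ℝ)..(π/4 : ℝ), 1 / Real.sqrt (1 + (Real.cos (2 * θ)) ^ 2))) :=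
      ((hSc.tendsto _).mono_left nhdsWithin_le_nhds).const_mul 2
    have heqev : ∀ᶠ a in nhdsWithin (π/4 : ℝ) (Set.Ico 0 (π/4)),
        (∫ θ in (0:ℝ)..(gsub a), 1 / Real.sqrt (Real.cos (2 * θ))) =
          2 * ∫ θ in (0:ℝ)..a, 1 / Real.sqrt (1 + (Real.cos (2 * θ)) ^ 2) := by
      filter_upwards [self_mem_nhdsWithin] with a ha
      exact key_subst ha.1 ha.2
    exact tendsto_nhds_unique (hF.congr' heqev) hG
end

section
/- For every R ∈ [0, 1], ∫_{R²}^1 1/√(1 − r⁴) dr = √2 · ∫₀^{√((1−R²)/(1+R²))} 1/√(1 + v⁴) dv. -/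
open Set MeasureTheory intervalIntegral

theorem aux_integrable : IntegrableOn (fun r : ℝ => 1 / Real.sqrt (1 - r^4)) (Set.Icc 0 1) := by
  have hmeas : AEStronglyMeasurable (fun r : ℝ => 1 / Real.sqrt (1 - r^4))
      (volume.restrict (Set.Icc (0:ℝ) 1)) := by
    have : Measurable (fun r : ℝ => 1 / Real.sqrt (1 - r^4)) := by
      simp only [one_div]
      exact (Real.continuous_sqrt.measurable.comp
        (measurable_const.sub ((measurable_id.pow_const 4)))).inv
    exact this.aestronglyMeasurable
  have hbound : IntegrableOn (fun r : ℝ => (1 - r) ^ (-(1:ℝ)/2)) (Set.Icc 0 1) := by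
    have h : IntervalIntegrable (fun x : ℝ => x ^ (-(1:ℝ)/2)) volume 0 1 :=
      intervalIntegral.intervalIntegrable_rpow' (by norm_num)
    have h2 := (h.comp_sub_left 1).symm
    simp only [sub_zero, sub_self] at h2
    rw [intervalIntegrable_iff_integrableOn_Icc_of_le (by norm_num)] at h2
    exact h2
  refine hbound.mono' hmeas ?_
  filter_upwards [ae_restrict_mem measurableSet_Icc] with r hr
  obtain ⟨h0, h1⟩ := hr
  rw [Real.norm_eq_abs, abs_of_nonneg (by positivity)]
  have hpos : (0:ℝ) ≤ 1 - r := by linarith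
  rw [show (-(1:ℝ)/2) = -(1/2) by ring, Real.rpow_neg hpos, ← Real.sqrt_eq_rpow, ← one_div]
  have hr4 : r ^ 4 ≤ r := by nlinarith [mul_nonneg h0 h0, sq_nonneg r, sq_nonneg (1 - r), mul_nonneg (mul_nonneg h0 h0) h0]
  have hle : Real.sqrt (1 - r) ≤ Real.sqrt (1 - r^4) := Real.sqrt_le_sqrt (by linarith)
  rcases eq_or_lt_of_le h1 with rfl | h1
  · simp
  · exact one_div_le_one_div_of_le (Real.sqrt_pos.mpr (by linarith)) hle

theorem aux_pointwise (v : ℝ) (hv : 0 < v) :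
    (-4*v/(1+v^2)^2) * (1/Real.sqrt (1 - ((1-v^2)/(1+v^2))^4)) =
      -(Real.sqrt 2) * (1/Real.sqrt (1+v^4)) := by
  have hd : (0:ℝ) < 1 + v^2 := by positivity
  set a := Real.sqrt 2 with ha
  set s := Real.sqrt (1 + v^4) with hs
  have ha2 : a^2 = 2 := Real.sq_sqrt (by norm_num)
  have hs2 : s^2 = 1 + v^4 := Real.sq_sqrt (by positivity)
  have hspos : 0 < s := Real.sqrt_pos.mpr (by positivity)
  have hapos : 0 < a := Real.sqrt_pos.mpr (by norm_num)
  have key : 1 - ((1-v^2)/(1+v^2))^4 = (2*a*v*s/(1+v^2)^2)^2 := by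
    have e1 : 1 - ((1-v^2)/(1+v^2))^4 = (8*v^2*(1+v^4))/(1+v^2)^4 := by
      field_simp; ring
    have e2 : (2*a*v*s/(1+v^2)^2)^2 = 4*a^2*s^2*v^2/(1+v^2)^4 := by
      rw [div_pow]; ring_nf
    rw [e1, e2, ha2, hs2]; ring
  rw [key, Real.sqrt_sq (by positivity)]
  rw [one_div_div]
  field_simp
  linear_combination 2 * ha2

theorem lemniscate_arc_from_Rsq_eq_sqrt_two_mul_squircle
    (R : ℝ) (hR : R ∈ Set.Icc (0:ℝ) 1) :
    ∫ r in (R ^ 2)..1, 1 / Real.sqrt (1 - r ^ 4) =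
      Real.sqrt 2 *
        ∫ v in (0:ℝ)..Real.sqrt ((1 - R ^ 2) / (1 + R ^ 2)), 1 / Real.sqrt (1 + v ^ 4) := by
  obtain ⟨hR0, hR1⟩ := hR
  set V : ℝ := Real.sqrt ((1 - R ^ 2) / (1 + R ^ 2)) with hVdef
  set φ : ℝ → ℝ := fun v => (1 - v^2)/(1 + v^2) with hφ
  set φ' : ℝ → ℝ := fun v => -4*v/(1+v^2)^2 with hφ'
  set g : ℝ → ℝ := fun r => 1 / Real.sqrt (1 - r^4) with hg
  have hV0 : 0 ≤ V := Real.sqrt_nonneg _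
  have hRd : (0:ℝ) < 1 + R^2 := by positivity
  have hV2 : V^2 = (1 - R^2)/(1 + R^2) :=
    Real.sq_sqrt (div_nonneg (by nlinarith) hRd.le)
  have hφ0 : φ 0 = 1 := by simp [hφ]
  have hφV : φ V = R^2 := by
    simp only [hφ]
    rw [hV2]
    have hnum : 1 - (1 - R^2)/(1 + R^2) = 2*R^2/(1 + R^2) := by field_simp; ring
    have hden : 1 + (1 - R^2)/(1 + R^2) = 2/(1 + R^2) := by field_simp; norm_num
    rw [hnum, hden, div_div_div_comm, div_self hRd.ne', div_one]
    ring
  -- derivative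
  have hder : ∀ v : ℝ, HasDerivAt φ (φ' v) v := by
    intro v
    have h1 : HasDerivAt (fun v : ℝ => 1 - v^2) (-(2*v)) v := by
      simpa using ((hasDerivAt_pow 2 v).const_sub 1)
    have h2 : HasDerivAt (fun v : ℝ => 1 + v^2) (2*v) v := by
      simpa using ((hasDerivAt_pow 2 v).const_add 1)
    have hne : (1 + v^2) ≠ 0 := by positivity
    have := h1.div h2 hne
    convert this using 1
    show -4*v/(1+v^2)^2 = _
    ring
    all_goals rfl
  -- monotone bound: image of [0,V] ⊆ [R², 1]
  have himg : ∀ v ∈ Set.uIcc (0:ℝ) V, φ v ∈ Set.Icc (R^2) 1 := by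
    intro v hv
    rw [Set.uIcc_of_le hV0] at hv
    obtain ⟨h0, hV⟩ := hv
    have hd : (0:ℝ) < 1 + v^2 := by positivity
    constructor
    · rw [← hφV]
      simp only [hφ]
      rw [div_le_div_iff₀ (by positivity) hd]
      nlinarith [sq_nonneg v, sq_nonneg V, mul_le_mul_of_nonneg_left (pow_le_pow_left₀ h0 hV 2) (by norm_num : (0:ℝ) ≤ 1)]
    · simp only [hφ]
      rw [div_le_one hd]
      nlinarith [sq_nonneg v]
  -- change of variables
  have hsub : (∫ v in (0:ℝ)..V, φ' v • g (φ v)) = ∫ r in (φ 0)..(φ V), g r := by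
    apply intervalIntegral.integral_comp_smul_deriv''' (f := φ) (f' := φ') (g := g)
    · exact (continuousOn_const.sub (continuous_pow 2).continuousOn).div
        (continuousOn_const.add (continuous_pow 2).continuousOn)
        (fun x _ => by positivity)
    · intro x hx
      exact (hder x).hasDerivWithinAt
    · -- continuity of g on φ '' Ioo
      have hsub2 : φ '' Set.Ioo (min 0 V) (max 0 V) ⊆ Set.Ioo (-1:ℝ) 1 := by
        rintro _ ⟨v, hv, rfl⟩
        rw [min_eq_left hV0, max_eq_right hV0] at hv
        have hv0 : 0 < v := hv.1
        have hd : (0:ℝ) < 1 + v^2 := by positivity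
        constructor
        · rw [lt_div_iff₀ hd]; nlinarith
        · rw [div_lt_one hd]; nlinarith
      refine ContinuousOn.mono ?_ hsub2
      intro r hr
      have : (0:ℝ) < 1 - r^4 := by
        obtain ⟨h1, h2⟩ := hr
        nlinarith [mul_pos (show (0:ℝ) < 1 - r by linarith) (show (0:ℝ) < 1 + r by linarith), sq_nonneg r]
      exact (continuousOn_const.div
        ((Real.continuous_sqrt.comp_continuousOn
          (continuousOn_const.sub (continuous_pow 4).continuousOn)))
        (fun x hx => by
          have : (0:ℝ) < 1 - x^4 := by
            obtain ⟨h1, h2⟩ := hx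
            nlinarith [mul_pos (show (0:ℝ) < 1 - x by linarith) (show (0:ℝ) < 1 + x by linarith), sq_nonneg x]
          exact ne_of_gt (Real.sqrt_pos.mpr this))) r hr
    · refine aux_integrable.mono_set ?_
      rintro _ ⟨v, hv, rfl⟩
      have := himg v hv
      exact ⟨le_trans (by positivity) this.1, this.2⟩
    · -- integrability of the composed function : equals ae to continuous function
      have hcont : Continuous (fun v : ℝ => -(Real.sqrt 2) * (1/Real.sqrt (1+v^4))) := by
        apply Continuous.mul continuous_const
        apply Continuous.div continuous_const
        · exact Real.continuous_sqrt.comp (continuous_const.add (continuous_pow 4))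
        · intro x; exact ne_of_gt (Real.sqrt_pos.mpr (by positivity))
      refine (hcont.integrableOn_uIcc).congr ?_
      have hne : ∀ᵐ v ∂(volume.restrict (Set.uIcc (0:ℝ) V)), v ≠ 0 := by
        refine ae_restrict_of_ae ?_
        have : (volume : Measure ℝ) {0} = 0 := Real.volume_singleton
        rw [ae_iff]
        convert this using 2
        ext x; simp
      filter_upwards [hne, ae_restrict_mem measurableSet_uIcc] with v hv0 hv
      rw [Set.uIcc_of_le hV0] at hv
      have hvpos : 0 < v := lt_of_le_of_ne hv.1 (Ne.symm hv0)
      have := aux_pointwise v hvpos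
      simp only [hφ, hφ', hg, Function.comp, smul_eq_mul]
      linarith [this]
  rw [hφ0, hφV] at hsub
  have flip : ∫ r in (R ^ 2)..1, 1 / Real.sqrt (1 - r ^ 4) = -(∫ r in (1:ℝ)..(R^2), g r) := by
    rw [intervalIntegral.integral_symm]
  rw [flip, ← hsub]
  have congr2 : (∫ v in (0:ℝ)..V, φ' v • g (φ v)) =
      ∫ v in (0:ℝ)..V, -(Real.sqrt 2) * (1/Real.sqrt (1+v^4)) := by
    apply intervalIntegral.integral_congr_ae
    have hne : ∀ᵐ (v:ℝ) ∂volume, v ≠ 0 := by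
      rw [ae_iff]
      convert Real.volume_singleton (a := (0:ℝ)) using 2
      ext x; simp
    filter_upwards [hne] with v hv0 hv
    rw [Set.uIoc_of_le (by positivity)] at hv
    have hvpos : 0 < v := lt_of_le_of_ne hv.1.le (Ne.symm hv0)
    have := aux_pointwise v hvpos
    simp only [hφ, hφ', hg, Function.comp, smul_eq_mul]
    linarith [this]
  rw [congr2]
  rw [intervalIntegral.integral_const_mul]
  ring
end

section
/- ∫₀¹ 1/√(1 − x⁴) dx = √2 · ∫₀¹ (1 − x⁴)^{1/4} dx. -/
open Real MeasureTheory Set intervalIntegral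

lemma contOn_aux (a : ℝ) : ContinuousOn (fun x : ℝ => (1 - x^4) ^ a) (Ioo 0 1) := by
  apply ContinuousOn.rpow_const
  · fun_prop
  · intro x hx
    left
    have : x^4 < 1 := by
      have := pow_lt_one₀ hx.1.le hx.2 (n := 4) (by norm_num)
      linarith
    linarith

lemma aesm_aux (a : ℝ) :
    AEStronglyMeasurable (fun x : ℝ => (1 - x^4) ^ a) (volume.restrict (uIoc (0:ℝ) 1)) := by
  rw [uIoc_of_le (by norm_num : (0:ℝ) ≤ 1),
    ← Measure.restrict_congr_set (Ioo_ae_eq_Ioc (a := (0:ℝ)) (b := 1))]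
  exact (contOn_aux a).aestronglyMeasurable measurableSet_Ioo

lemma integrable_aux {a : ℝ} (ha : -1 < a) (ha0 : a < 0) :
    IntervalIntegrable (fun x : ℝ => (1 - x^4) ^ a) volume 0 1 := by
  have hdom : IntervalIntegrable (fun x : ℝ => (1 - x) ^ a) volume 0 1 := by
    have := ((intervalIntegrable_rpow' (a := 0) (b := 1) ha).comp_sub_left 1).symm
    simpa using this
  refine hdom.mono_fun (aesm_aux a) ?_
  rw [Filter.EventuallyLE, ae_restrict_iff' measurableSet_uIoc]
  filter_upwards with x hx
  rw [uIoc_of_le (by norm_num : (0:ℝ) ≤ 1)] at hx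
  obtain ⟨hx0, hx1⟩ := hx
  rcases eq_or_lt_of_le hx1 with h1 | h1
  · subst h1
    norm_num [Real.zero_rpow (ne_of_lt ha0), Real.rpow_nonneg]
  · have h14 : 0 < 1 - x := by linarith
    have hx4 : x^4 ≤ x := by
      calc x^4 ≤ x^1 := pow_le_pow_of_le_one hx0.le hx1 (by norm_num)
      _ = x := pow_one x
    have h2 : 1 - x ≤ 1 - x^4 := by linarith
    have hb : (1 - x^4 : ℝ) ^ a ≤ (1 - x) ^ a := rpow_le_rpow_of_nonpos h14 h2 ha0.le
    have hnn : (0:ℝ) ≤ (1 - x^4) ^ a := Real.rpow_nonneg (by linarith) _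
    have hnn2 : (0:ℝ) ≤ (1 - x) ^ a := Real.rpow_nonneg h14.le _
    simp only [Real.norm_eq_abs, abs_of_nonneg hnn, abs_of_nonneg hnn2]
    exact hb

lemma base_pos {x : ℝ} (hx : x ∈ Ioo (0:ℝ) 1) : (0:ℝ) < 1 - x^4 := by
  have := pow_lt_one₀ hx.1.le hx.2 (n := 4) (by norm_num)
  linarith

lemma hasDeriv_aux (p : ℝ) {x : ℝ} (hx : x ∈ Ioo (0:ℝ) 1) :
    HasDerivAt (fun y : ℝ => (1 - y^4) ^ p) (-(4 * x^3) * p * (1 - x^4) ^ (p - 1)) x := by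
  have h1 : HasDerivAt (fun y : ℝ => 1 - y^4) (-(4 * x^3)) x := by
    simpa using (hasDerivAt_pow 4 x).const_sub 1
  exact h1.rpow_const (Or.inl (base_pos hx).ne')

-- the IBP primitive:  φ x = x (1-x⁴)^{1/4},  φ' = 2(1-x⁴)^{1/4} - (1-x⁴)^{-3/4}
lemma hasDeriv_phi {x : ℝ} (hx : x ∈ Ioo (0:ℝ) 1) :
    HasDerivAt (fun y : ℝ => y * (1 - y^4) ^ ((1:ℝ)/4))
      (2 * (1 - x^4) ^ ((1:ℝ)/4) - (1 - x^4) ^ (-(3:ℝ)/4)) x := by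
  have hb := base_pos hx
  have h := (hasDerivAt_id x).mul (hasDeriv_aux ((1:ℝ)/4) hx)
  refine h.congr_deriv (Eq.symm ?_)
  have e1 : (1 - x^4) ^ ((1:ℝ)/4 - 1) = (1 - x^4) ^ (-(3:ℝ)/4) := by norm_num
  have e2 : (1 - x^4) * (1 - x^4) ^ (-(3:ℝ)/4) = (1 - x^4) ^ ((1:ℝ)/4) := by
    rw [show ((1:ℝ)/4) = 1 + (-(3:ℝ)/4) by norm_num, Real.rpow_add hb, Real.rpow_one]
  rw [e1]
  simp only [id_eq]
  linear_combination -e2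

lemma intA : IntervalIntegrable (fun x : ℝ => (1 - x^4) ^ ((1:ℝ)/4)) volume 0 1 := by
  apply ContinuousOn.intervalIntegrable
  apply ContinuousOn.rpow_const (by fun_prop)
  intro x _; right; norm_num

lemma ibp : ∫ x in (0:ℝ)..1, (1 - x^4) ^ (-(3:ℝ)/4) =
    2 * ∫ x in (0:ℝ)..1, (1 - x^4) ^ ((1:ℝ)/4) := by
  have hM := integrable_aux (a := -(3:ℝ)/4) (by norm_num) (by norm_num)
  have key : ∫ x in (0:ℝ)..1,
      (2 * (1 - x^4) ^ ((1:ℝ)/4) - (1 - x^4) ^ (-(3:ℝ)/4)) = 0 := by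
    rw [integral_eq_sub_of_hasDeriv_right_of_le (f := fun y : ℝ => y * (1 - y^4) ^ ((1:ℝ)/4))
      (by norm_num)
      (by
        apply ContinuousOn.mul continuousOn_id
        apply ContinuousOn.rpow_const (by fun_prop)
        intro x _; right; norm_num)
      (fun x hx => (hasDeriv_phi hx).hasDerivWithinAt)
      (((intA).const_mul 2).sub hM)]
    norm_num [Real.zero_rpow]
  rw [intervalIntegral.integral_sub ((intA).const_mul 2) hM,
    intervalIntegral.integral_const_mul] at key
  linarith

noncomputable def Fprim : ℝ → ℝ := fun u => ∫ t in (0:ℝ)..u, (1 - t^4) ^ (-(1:ℝ)/2)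

noncomputable def gmap : ℝ → ℝ := fun x => Real.sqrt 2 * (x * (1 - x^4) ^ ((1:ℝ)/4))

lemma hL_int : IntervalIntegrable (fun x : ℝ => (1 - x^4) ^ (-(1:ℝ)/2)) volume 0 1 :=
  integrable_aux (by norm_num) (by norm_num)

lemma hF_cont : ContinuousOn Fprim (Icc 0 1) := by
  have := intervalIntegral.continuousOn_primitive_interval
    (a := (0:ℝ)) (b := 1) (μ := volume) (f := fun t : ℝ => (1 - t^4) ^ (-(1:ℝ)/2)) ?_
  · exact (by simpa [uIcc_of_le (by norm_num : (0:ℝ) ≤ 1)] using this :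
      ContinuousOn (fun u => ∫ t in (0:ℝ)..u, (1 - t^4) ^ (-(1:ℝ)/2)) (Icc 0 1))
  · rw [uIcc_of_le (by norm_num : (0:ℝ) ≤ 1)]
    exact (intervalIntegrable_iff_integrableOn_Icc_of_le (by norm_num)).mp hL_int

lemma hF_deriv {u : ℝ} (hu : u ∈ Ioo (0:ℝ) 1) :
    HasDerivAt Fprim ((1 - u^4) ^ (-(1:ℝ)/2)) u := by
  apply intervalIntegral.integral_hasDerivAt_right
  · exact hL_int.mono_set (by
      rw [uIcc_of_le (by norm_num : (0:ℝ) ≤ 1), uIcc_of_le hu.1.le]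
      exact Icc_subset_Icc le_rfl hu.2.le)
  · exact ContinuousOn.stronglyMeasurableAtFilter isOpen_Ioo (contOn_aux _) u hu
  · exact (contOn_aux _).continuousAt (Ioo_mem_nhds hu.1 hu.2)

lemma rpow4 {y : ℝ} (hy : 0 ≤ y) : (y ^ ((1:ℝ)/4)) ^ 4 = y := by
  rw [← Real.rpow_natCast (y ^ ((1:ℝ)/4)) 4, ← Real.rpow_mul hy]
  norm_num

lemma hg4 {x : ℝ} (hx : x ∈ Icc (0:ℝ) 1) : (gmap x)^4 = 4 * x^4 * (1 - x^4) := by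
  have hb : (0:ℝ) ≤ 1 - x^4 := by
    have : x^4 ≤ 1 := pow_le_one₀ hx.1 hx.2
    linarith
  have h2 : (Real.sqrt 2)^4 = 4 := by
    rw [show 4 = 2 * 2 by rfl, pow_mul, Real.sq_sqrt (by norm_num : (0:ℝ) ≤ 2)]
    norm_num
  rw [gmap, mul_pow, mul_pow, rpow4 hb, h2]
  ring

lemma hg_nonneg {x : ℝ} (hx : x ∈ Icc (0:ℝ) 1) : 0 ≤ gmap x := by
  have h1 : (0:ℝ) ≤ (1 - x^4) ^ ((1:ℝ)/4) := Real.rpow_nonneg (by nlinarith [pow_le_one₀ hx.1 hx.2 (n := 4)]) _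
  exact mul_nonneg (Real.sqrt_nonneg 2) (mul_nonneg hx.1 h1)

lemma hg_mem {x : ℝ} (hx : x ∈ Icc (0:ℝ) 1) : gmap x ∈ Icc (0:ℝ) 1 := by
  refine ⟨hg_nonneg hx, ?_⟩
  have h4 : (gmap x)^4 ≤ 1 := by
    rw [hg4 hx]; nlinarith [sq_nonneg (1 - 2*x^4)]
  exact (pow_le_one_iff_of_nonneg (hg_nonneg hx) (by norm_num)).mp h4

lemma hg_cont : ContinuousOn gmap (Icc (0:ℝ) 1) := by
  apply ContinuousOn.mul continuousOn_const
  apply ContinuousOn.mul continuousOn_id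
  apply ContinuousOn.rpow_const (by fun_prop)
  intro x _; right; norm_num

lemma hg_deriv {x : ℝ} (hx : x ∈ Ioo (0:ℝ) 1) :
    HasDerivAt gmap (Real.sqrt 2 * ((1 - 2*x^4) * (1 - x^4) ^ (-(3:ℝ)/4))) x := by
  have hb := base_pos hx
  have h := (hasDeriv_phi hx).const_mul (Real.sqrt 2)
  refine h.congr_deriv (Eq.symm ?_)
  have e2 : (1 - x^4) * (1 - x^4) ^ (-(3:ℝ)/4) = (1 - x^4) ^ ((1:ℝ)/4) := by
    rw [show ((1:ℝ)/4) = 1 + (-(3:ℝ)/4) by norm_num, Real.rpow_add hb, Real.rpow_one]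
  linear_combination (2 * Real.sqrt 2) * e2

noncomputable def c₀ : ℝ := (2:ℝ) ^ (-(1:ℝ)/4)

lemma hc0_pos : 0 < c₀ := Real.rpow_pos_of_pos (by norm_num) _

lemma hc0_pow : c₀ ^ 4 = 1/2 := by
  rw [c₀, ← Real.rpow_natCast ((2:ℝ) ^ (-(1:ℝ)/4)) 4, ← Real.rpow_mul (by norm_num)]
  norm_num [Real.rpow_neg_one]

lemma hc0_lt_one : c₀ < 1 := by
  nlinarith [hc0_pos, hc0_pow, sq_nonneg (c₀ - 1), sq_nonneg (c₀ + 1), sq_nonneg (c₀^2 - 1), sq_nonneg (c₀^2 + 1)]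

-- composite derivative on (0, c₀)
lemma comp_deriv_left {x : ℝ} (hx : x ∈ Ioo (0:ℝ) c₀) :
    HasDerivAt (fun y => Fprim (gmap y)) (Real.sqrt 2 * (1 - x^4) ^ (-(3:ℝ)/4)) x := by
  have hx01 : x ∈ Ioo (0:ℝ) 1 := ⟨hx.1, hx.2.trans hc0_lt_one⟩
  have hb := base_pos hx01
  have ht : 0 < 1 - 2*x^4 := by
    have : x^4 < c₀^4 := pow_lt_pow_left₀ hx.2 hx.1.le (by norm_num)
    rw [hc0_pow] at this; linarith
  have hgmem : gmap x ∈ Ioo (0:ℝ) 1 := by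
    constructor
    · have h1 : (0:ℝ) < (1 - x^4) ^ ((1:ℝ)/4) := Real.rpow_pos_of_pos hb _
      have h2 : (0:ℝ) < Real.sqrt 2 := Real.sqrt_pos.mpr (by norm_num)
      exact mul_pos h2 (mul_pos hx01.1 h1)
    · have h4 : (gmap x)^4 < 1 := by
        rw [hg4 (Ioo_subset_Icc_self hx01)]; nlinarith
      exact (pow_lt_one_iff_of_nonneg (hg_nonneg (Ioo_subset_Icc_self hx01)) (by norm_num)).mp h4
  have hcomp := (hF_deriv hgmem).comp x (hg_deriv hx01)
  refine hcomp.congr_deriv (Eq.symm ?_)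
  have e1 : 1 - (gmap x)^4 = (1 - 2*x^4)^2 := by
    rw [hg4 (Ioo_subset_Icc_self hx01)]; ring
  have e2 : (1 - (gmap x)^4) ^ (-(1:ℝ)/2) = (1 - 2*x^4)⁻¹ := by
    rw [e1, ← Real.rpow_natCast (1 - 2*x^4) 2, ← Real.rpow_mul ht.le]
    norm_num
    rw [Real.rpow_neg ht.le, Real.rpow_one]
  rw [e2]
  field_simp [ht.ne']
  have h : 1 - x^4*2 ≠ 0 := by linarith
  ring_nf
  field_simp
  ring

lemma comp_deriv_right {x : ℝ} (hx : x ∈ Ioo c₀ 1) :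
    HasDerivAt (fun y => Fprim (gmap y)) (-(Real.sqrt 2 * (1 - x^4) ^ (-(3:ℝ)/4))) x := by
  have hx01 : x ∈ Ioo (0:ℝ) 1 := ⟨hc0_pos.trans hx.1, hx.2⟩
  have hb := base_pos hx01
  have ht : 0 < 2*x^4 - 1 := by
    have : c₀^4 < x^4 := pow_lt_pow_left₀ hx.1 hc0_pos.le (by norm_num)
    rw [hc0_pow] at this; linarith
  have hgmem : gmap x ∈ Ioo (0:ℝ) 1 := by
    constructor
    · have h1 : (0:ℝ) < (1 - x^4) ^ ((1:ℝ)/4) := Real.rpow_pos_of_pos hb _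
      have h2 : (0:ℝ) < Real.sqrt 2 := Real.sqrt_pos.mpr (by norm_num)
      exact mul_pos h2 (mul_pos hx01.1 h1)
    · have h4 : (gmap x)^4 < 1 := by
        rw [hg4 (Ioo_subset_Icc_self hx01)]; nlinarith
      exact (pow_lt_one_iff_of_nonneg (hg_nonneg (Ioo_subset_Icc_self hx01)) (by norm_num)).mp h4
  have hcomp := (hF_deriv hgmem).comp x (hg_deriv hx01)
  refine hcomp.congr_deriv (Eq.symm ?_)
  have e1 : 1 - (gmap x)^4 = (2*x^4 - 1)^2 := by
    rw [hg4 (Ioo_subset_Icc_self hx01)]; ring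
  have e2 : (1 - (gmap x)^4) ^ (-(1:ℝ)/2) = (2*x^4 - 1)⁻¹ := by
    rw [e1, ← Real.rpow_natCast (2*x^4 - 1) 2, ← Real.rpow_mul ht.le]
    norm_num [Real.rpow_neg_one]
  rw [e2]
  field_simp [ht.ne']
  have h : -1 + x^4*2 ≠ 0 := by linarith
  ring_nf
  field_simp
  ring

lemma gmap_zero : gmap 0 = 0 := by simp [gmap]

lemma gmap_one : gmap 1 = 0 := by
  simp [gmap, Real.zero_rpow (by norm_num : ((1:ℝ)/4) ≠ 0)]

lemma gmap_c₀ : gmap c₀ = 1 := by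
  have h4 : (gmap c₀)^4 = 1 := by
    rw [hg4 ⟨hc0_pos.le, hc0_lt_one.le⟩, hc0_pow]; norm_num
  have h0 : 0 ≤ gmap c₀ := hg_nonneg ⟨hc0_pos.le, hc0_lt_one.le⟩
  nlinarith [sq_nonneg (gmap c₀ - 1), sq_nonneg (gmap c₀ + 1), sq_nonneg ((gmap c₀)^2 - 1), sq_nonneg ((gmap c₀)^2 + 1)]

lemma subst_key : Real.sqrt 2 * ∫ x in (0:ℝ)..1, (1 - x^4) ^ (-(3:ℝ)/4)
    = 2 * Fprim 1 := by
  have hM := integrable_aux (a := -(3:ℝ)/4) (by norm_num : (-1:ℝ) < -(3:ℝ)/4) (by norm_num)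
  have hMs : IntervalIntegrable (fun x : ℝ => Real.sqrt 2 * (1 - x^4) ^ (-(3:ℝ)/4)) volume 0 1 :=
    hM.const_mul _
  have hsub1 : uIoc (0:ℝ) c₀ ⊆ uIoc (0:ℝ) 1 := by
    rw [uIoc_of_le hc0_pos.le, uIoc_of_le (by norm_num : (0:ℝ) ≤ 1)]
    exact Ioc_subset_Ioc le_rfl hc0_lt_one.le
  have hsub2 : uIoc c₀ (1:ℝ) ⊆ uIoc (0:ℝ) 1 := by
    rw [uIoc_of_le hc0_lt_one.le, uIoc_of_le (by norm_num : (0:ℝ) ≤ 1)]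
    exact Ioc_subset_Ioc hc0_pos.le le_rfl
  have hcont : ContinuousOn (fun y => Fprim (gmap y)) (Icc (0:ℝ) 1) :=
    hF_cont.comp hg_cont (fun x hx => hg_mem hx)
  have left : ∫ x in (0:ℝ)..c₀, Real.sqrt 2 * (1 - x^4) ^ (-(3:ℝ)/4) = Fprim 1 := by
    rw [integral_eq_sub_of_hasDeriv_right_of_le hc0_pos.le
      (hcont.mono (Icc_subset_Icc le_rfl hc0_lt_one.le))
      (fun x hx => (comp_deriv_left hx).hasDerivWithinAt)
      (hMs.mono_set' hsub1)]
    rw [gmap_c₀, gmap_zero]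
    simp [Fprim]
  have right : ∫ x in c₀..(1:ℝ), Real.sqrt 2 * (1 - x^4) ^ (-(3:ℝ)/4) = Fprim 1 := by
    have := integral_eq_sub_of_hasDeriv_right_of_le hc0_lt_one.le
      (hcont.mono (Icc_subset_Icc hc0_pos.le le_rfl))
      (fun x hx => (comp_deriv_right hx).hasDerivWithinAt)
      ((hMs.mono_set' hsub2).neg)
    rw [gmap_one, gmap_c₀] at this
    have h0 : Fprim 0 = 0 := by simp [Fprim]
    rw [intervalIntegral.integral_neg] at this
    rw [h0] at this
    linarith
  calc Real.sqrt 2 * ∫ x in (0:ℝ)..1, (1 - x^4) ^ (-(3:ℝ)/4)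
      = ∫ x in (0:ℝ)..1, Real.sqrt 2 * (1 - x^4) ^ (-(3:ℝ)/4) := by
        rw [intervalIntegral.integral_const_mul]
    _ = (∫ x in (0:ℝ)..c₀, Real.sqrt 2 * (1 - x^4) ^ (-(3:ℝ)/4))
        + ∫ x in c₀..(1:ℝ), Real.sqrt 2 * (1 - x^4) ^ (-(3:ℝ)/4) := by
        rw [intervalIntegral.integral_add_adjacent_intervals
          (hMs.mono_set' hsub1) (hMs.mono_set' hsub2)]
    _ = 2 * Fprim 1 := by rw [left, right]; ring

theorem lemniscate_integral_eq_sqrt_two_mul_squircle_integral :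
    ∫ x in (0:ℝ)..1, 1 / Real.sqrt (1 - x ^ 4) =
      Real.sqrt 2 * ∫ x in (0:ℝ)..1, (1 - x ^ 4) ^ ((1:ℝ) / 4) := by
  have hL : ∫ x in (0:ℝ)..1, 1 / Real.sqrt (1 - x ^ 4) = Fprim 1 := by
    rw [Fprim]
    apply intervalIntegral.integral_congr
    intro x hx
    rw [uIcc_of_le (by norm_num : (0:ℝ) ≤ 1)] at hx
    have hb : (0:ℝ) ≤ 1 - x^4 := by nlinarith [pow_le_one₀ hx.1 hx.2 (n := 4)]
    show 1 / Real.sqrt (1 - x^4) = (1 - x^4) ^ (-(1:ℝ)/2)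
    rw [Real.sqrt_eq_rpow, show (-(1:ℝ)/2) = -(1/2 : ℝ) by norm_num,
      Real.rpow_neg hb, one_div]
  have h1 := subst_key
  have h2 := ibp
  rw [h2] at h1
  rw [hL]
  linarith
end

section
/- For every T ∈ [0, 1], setting R = √2·T/√(1 + T⁴), one has ∫₀^R 1/√(1 − r⁴) dr = √2 · ∫₀^T 1/√(1 + t⁴) dt. -/
open Set MeasureTheory intervalIntegral

noncomputable def phi (t : ℝ) : ℝ := Real.sqrt 2 * t / Real.sqrt (1 + t ^ 4)

noncomputable def phi' (t : ℝ) : ℝ :=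
  Real.sqrt 2 * (1 - t ^ 4) / (Real.sqrt (1 + t ^ 4)) ^ 3

lemma one_add_pow_pos (t : ℝ) : (0:ℝ) < 1 + t ^ 4 := by positivity

lemma sqrt_sq' (t : ℝ) : Real.sqrt (1 + t ^ 4) ^ 2 = 1 + t ^ 4 :=
  Real.sq_sqrt (one_add_pow_pos t).le

lemma sqrt_pos' (t : ℝ) : 0 < Real.sqrt (1 + t ^ 4) :=
  Real.sqrt_pos.mpr (one_add_pow_pos t)

lemma phi_hasDerivAt (x : ℝ) : HasDerivAt phi (phi' x) x := by
  have hs := sqrt_pos' x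
  have h2 := sqrt_sq' x
  have hinner : HasDerivAt (fun t : ℝ => 1 + t ^ 4) (4 * x ^ 3) x := by
    simpa using ((hasDerivAt_pow 4 x).const_add 1)
  have hsq : HasDerivAt (fun t : ℝ => Real.sqrt (1 + t ^ 4))
      (4 * x ^ 3 / (2 * Real.sqrt (1 + x ^ 4))) x :=
    hinner.sqrt (one_add_pow_pos x).ne'
  have hnum : HasDerivAt (fun t : ℝ => Real.sqrt 2 * t) (Real.sqrt 2) x := by
    simpa using (hasDerivAt_id x).const_mul (Real.sqrt 2)
  have := hnum.div hsq hs.ne'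
  refine HasDerivAt.congr_deriv this ?_
  symm
  unfold phi'
  rw [eq_div_iff (by positivity)]
  field_simp
  linear_combination (-2 * Real.sqrt 2 * Real.sqrt (1 + x ^ 4) ^ 3
    + (2 * x ^ 4 - 2) * Real.sqrt 2 * Real.sqrt (1 + x ^ 4) - 2
    + 2 * Real.sqrt 2 * Real.sqrt (1 + x ^ 4) * (Real.sqrt (1 + x ^ 4) ^ 2 - x ^ 4 + 1)) * h2

lemma phi_prod (x : ℝ) (hx0 : 0 ≤ x) (hx1 : x < 1) :
    (1 / Real.sqrt (1 - phi x ^ 4)) * phi' x = Real.sqrt 2 * (1 / Real.sqrt (1 + x ^ 4)) := by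
  have hs := sqrt_pos' x
  have h2 := sqrt_sq' x
  have hu : (0:ℝ) < 1 + x ^ 4 := one_add_pow_pos x
  have hx4 : x ^ 4 < 1 := pow_lt_one₀ hx0 hx1 (by norm_num)
  have h2' : Real.sqrt 2 ^ 2 = 2 := Real.sq_sqrt (by norm_num)
  have hs4 : Real.sqrt (1 + x ^ 4) ^ 4 = (1 + x ^ 4) ^ 2 := by
    rw [show (4:ℕ) = 2 * 2 from rfl, pow_mul, h2]
  have h24 : Real.sqrt 2 ^ 4 = 4 := by
    rw [show (4:ℕ) = 2 * 2 from rfl, pow_mul, h2']; norm_num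
  have hphi4 : 1 - phi x ^ 4 = ((1 - x ^ 4) / (1 + x ^ 4)) ^ 2 := by
    unfold phi
    rw [div_pow, mul_pow, h24, hs4]
    field_simp
    ring
  rw [hphi4, Real.sqrt_sq (div_nonneg (by linarith) hu.le)]
  have hs3 : Real.sqrt (1 + x ^ 4) ^ 3 = (1 + x ^ 4) * Real.sqrt (1 + x ^ 4) := by
    rw [pow_succ, h2]
  have h1x4 : (0:ℝ) < 1 - x ^ 4 := by linarith
  unfold phi'
  rw [hs3]
  field_simp [h1x4.ne', hs.ne', hu.ne']

lemma sqrt2_mul (x : ℝ) (hx0 : 0 ≤ x) : Real.sqrt 2 * x = Real.sqrt (2 * x ^ 2) := by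
  rw [Real.sqrt_mul (by norm_num), Real.sqrt_sq hx0]

lemma phi_mem (x : ℝ) (hx0 : 0 ≤ x) (hx1 : x ≤ 1) : phi x ∈ Icc (0:ℝ) 1 := by
  have hs := sqrt_pos' x
  refine ⟨by unfold phi; positivity, ?_⟩
  unfold phi
  rw [div_le_one hs, sqrt2_mul x hx0]
  exact Real.sqrt_le_sqrt (by nlinarith [sq_nonneg (1 - x ^ 2)])

lemma phi_lt_one (x : ℝ) (hx0 : 0 ≤ x) (hx1 : x < 1) : phi x < 1 := by
  have hs := sqrt_pos' x
  unfold phi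
  rw [div_lt_one hs, sqrt2_mul x hx0]
  have hx2 : x ^ 2 < 1 := pow_lt_one₀ hx0 hx1 (by norm_num)
  exact Real.sqrt_lt_sqrt (by positivity) (by nlinarith [sq_nonneg (1 - x ^ 2)])

lemma integrableOn_g : IntegrableOn (fun r : ℝ => 1 / Real.sqrt (1 - r ^ 4)) (Icc 0 1) volume := by
  have hmaj : IntervalIntegrable (fun r : ℝ => (1 - r) ^ (-(1/2) : ℝ)) volume 0 1 := by
    have := ((intervalIntegrable_rpow' (a := 0) (b := 1) (r := -(1/2))
      (by norm_num)).comp_sub_left 1).symm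
    simpa using this
  have hmaj' : IntegrableOn (fun r : ℝ => (1 - r) ^ (-(1/2) : ℝ)) (Icc 0 1) volume := by
    rw [intervalIntegrable_iff_integrableOn_Icc_of_le (by norm_num)] at hmaj
    exact hmaj
  apply hmaj'.integrable.mono'
  · apply AEStronglyMeasurable.restrict
    apply Measurable.aestronglyMeasurable
    apply Measurable.div measurable_const
    exact (Real.continuous_sqrt.comp (by continuity)).measurable
  · filter_upwards [ae_restrict_mem measurableSet_Icc] with r hr
    obtain ⟨hr0, hr1⟩ := hr
    rw [Real.norm_eq_abs, abs_of_nonneg (by positivity)]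
    rcases eq_or_lt_of_le hr1 with rfl | hr1'
    · simp
    · have h1 : (0:ℝ) < 1 - r := by linarith
      have hr4 : r ^ 4 ≤ r := by
        calc r ^ 4 ≤ r ^ 1 := pow_le_pow_of_le_one hr0 hr1 (by norm_num)
        _ = r := pow_one r
      have h14 : 1 - r ≤ 1 - r ^ 4 := by linarith
      rw [Real.rpow_neg h1.le, ← Real.sqrt_eq_rpow, one_div]
      have hBpos : 0 < Real.sqrt (1 - r) := Real.sqrt_pos.mpr h1
      gcongr

theorem siegel_relation (T : ℝ) (hT : T ∈ Set.Icc (0:ℝ) 1)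
    (R : ℝ) (hR : R = Real.sqrt 2 * T / Real.sqrt (1 + T ^ 4)) :
    ∫ r in (0:ℝ)..R, 1 / Real.sqrt (1 - r ^ 4) =
      Real.sqrt 2 * ∫ t in (0:ℝ)..T, 1 / Real.sqrt (1 + t ^ 4) := by
  obtain ⟨hT0, hT1⟩ := hT
  set g : ℝ → ℝ := fun r => 1 / Real.sqrt (1 - r ^ 4) with hg_def
  have hmin : min 0 T = 0 := min_eq_left hT0
  have hmax : max 0 T = T := max_eq_right hT0
  have huIcc : Set.uIcc (0:ℝ) T = Icc 0 T := uIcc_of_le hT0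
  have hne1 : ∀ᵐ x : ℝ, x ≠ (1:ℝ) := by
    rw [ae_iff]
    simp only [ne_eq, not_not]
    have : {x : ℝ | x = 1} = {1} := by ext x; simp
    rw [this]
    exact Real.volume_singleton
  have key : (∫ x in (0:ℝ)..T, (g ∘ phi) x * phi' x) = ∫ u in (phi 0)..(phi T), g u := by
    apply integral_comp_mul_deriv'''
    · exact fun x _ => (phi_hasDerivAt x).continuousAt.continuousWithinAt
    · exact fun x hx => (phi_hasDerivAt x).hasDerivWithinAt
    · rw [hmin, hmax]
      intro y hy
      obtain ⟨x, hx, rfl⟩ := hy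
      have hx0 : 0 ≤ x := hx.1.le
      have hx1 : x < 1 := lt_of_lt_of_le hx.2 hT1
      have hlt := phi_lt_one x hx0 hx1
      have hge := (phi_mem x hx0 hx1.le).1
      have hc : ContinuousAt g (phi x) := by
        apply ContinuousAt.div continuousAt_const
        · exact (Real.continuous_sqrt.comp (by continuity)).continuousAt
        · have h4 : phi x ^ 4 < 1 := pow_lt_one₀ hge hlt (by norm_num)
          have : (0:ℝ) < 1 - phi x ^ 4 := by linarith
          positivity
      exact hc.continuousWithinAt
    · apply integrableOn_g.mono_set
      rw [huIcc]
      rintro y ⟨x, hx, rfl⟩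
      exact phi_mem x hx.1 (le_trans hx.2 hT1)
    · rw [huIcc]
      have hcont : IntegrableOn (fun x : ℝ => Real.sqrt 2 * (1 / Real.sqrt (1 + x ^ 4)))
          (Icc 0 T) volume := by
        apply ContinuousOn.integrableOn_Icc
        apply Continuous.continuousOn
        apply Continuous.mul continuous_const
        apply Continuous.div continuous_const
        · continuity
        · exact fun x => (sqrt_pos' x).ne'
      apply hcont.congr_fun_ae
      filter_upwards [ae_restrict_mem measurableSet_Icc, ae_restrict_of_ae hne1]
        with x hx hx1
      have hxlt : x < 1 := lt_of_le_of_ne (le_trans hx.2 hT1) hx1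
      exact (phi_prod x hx.1 hxlt).symm
  have hphi0 : phi 0 = 0 := by simp [phi]
  have hphiT : phi T = R := by rw [hR]; rfl
  rw [hphi0, hphiT] at key
  rw [← key, ← intervalIntegral.integral_const_mul]
  apply intervalIntegral.integral_congr_ae
  filter_upwards [hne1] with x hx1 hx
  rw [uIoc_of_le hT0] at hx
  have hxlt : x < 1 := lt_of_le_of_ne (le_trans hx.2 hT1) hx1
  exact phi_prod x hx.1.le hxlt
end

section
/- For every R ∈ [0, 1], ∫₀^{√((1−R⁴)/(1+R⁴))} 1/√(1 − r⁴) dr = ∫_{R²}^1 1/√(1 − r⁴) dr. -/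
open MeasureTheory intervalIntegral Set Filter

noncomputable def lemF (r : ℝ) : ℝ := 1 / Real.sqrt (1 - r ^ 4)

noncomputable def lemG (s : ℝ) : ℝ := Real.sqrt ((1 - s ^ 2) / (1 + s ^ 2))

lemma lemG_sq {s : ℝ} (hs : s ∈ Set.Icc (-1:ℝ) 1) :
    lemG s ^ 2 = (1 - s ^ 2) / (1 + s ^ 2) := by
  have h1 : s ^ 2 ≤ 1 := by nlinarith [hs.1, hs.2]
  have h2 : (0:ℝ) < 1 + s ^ 2 := by positivity
  exact Real.sq_sqrt (div_nonneg (by linarith) h2.le)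

lemma lemG_mem {s : ℝ} (hs : s ∈ Set.Ioo (0:ℝ) 1) : lemG s ∈ Set.Ioo (0:ℝ) 1 := by
  have h1 : s ^ 2 < 1 := by nlinarith [hs.1, hs.2]
  have h2 : (0:ℝ) < 1 + s ^ 2 := by positivity
  constructor
  · exact Real.sqrt_pos.mpr (div_pos (by linarith) h2)
  · have h3 : (1 - s ^ 2) / (1 + s ^ 2) < 1 := by
      rw [div_lt_one h2]; nlinarith [hs.1]
    calc lemG s < Real.sqrt 1 :=
          Real.sqrt_lt_sqrt (div_nonneg (by linarith) h2.le) h3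
      _ = 1 := Real.sqrt_one

lemma lemG_invol {s : ℝ} (hs : s ∈ Set.Icc (0:ℝ) 1) : lemG (lemG s) = s := by
  have hs' : s ∈ Set.Icc (-1:ℝ) 1 := ⟨by linarith [hs.1], hs.2⟩
  have hg2 := lemG_sq hs'
  have h2 : (0:ℝ) < 1 + s ^ 2 := by positivity
  have harg : (1 - lemG s ^ 2) / (1 + lemG s ^ 2) = s ^ 2 := by
    rw [hg2]
    have e1 : 1 - (1 - s ^ 2) / (1 + s ^ 2) = 2 * s ^ 2 / (1 + s ^ 2) := by
      field_simp; ring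
    have e2 : 1 + (1 - s ^ 2) / (1 + s ^ 2) = 2 / (1 + s ^ 2) := by
      field_simp; norm_num
    rw [e1, e2]
    field_simp
  calc lemG (lemG s) = Real.sqrt ((1 - lemG s ^ 2) / (1 + lemG s ^ 2)) := rfl
    _ = Real.sqrt (s ^ 2) := by rw [harg]
    _ = s := Real.sqrt_sq hs.1

lemma lemG_hasDeriv {s : ℝ} (hs : s ∈ Set.Ioo (0:ℝ) 1) :
    HasDerivAt lemG (-2 * s / ((1 + s ^ 2) ^ 2 * lemG s)) s := by
  have h1 : s ^ 2 < 1 := by nlinarith [hs.1, hs.2]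
  have h2 : (0:ℝ) < 1 + s ^ 2 := by positivity
  have harg : (0:ℝ) < (1 - s ^ 2) / (1 + s ^ 2) := div_pos (by linarith) h2
  have hd1 : HasDerivAt (fun x : ℝ => 1 - x ^ 2) (-(2 * s)) s := by
    simpa using (hasDerivAt_pow 2 s).const_sub 1
  have hd2 : HasDerivAt (fun x : ℝ => 1 + x ^ 2) (2 * s) s := by
    simpa using (hasDerivAt_pow 2 s).const_add 1
  have hd : HasDerivAt (fun x : ℝ => (1 - x ^ 2) / (1 + x ^ 2))
      ((-(2 * s) * (1 + s ^ 2) - (1 - s ^ 2) * (2 * s)) / (1 + s ^ 2) ^ 2) s :=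
    hd1.div hd2 (ne_of_gt h2)
  have hsqrt := (Real.hasDerivAt_sqrt (ne_of_gt harg)).comp s hd
  have hgpos : 0 < lemG s := (lemG_mem hs).1
  have hgs : Real.sqrt ((1 - s ^ 2) / (1 + s ^ 2)) = lemG s := rfl
  refine HasDerivAt.congr_deriv hsqrt ?_
  rw [hgs]
  field_simp
  ring

lemma lemF_contOn : ContinuousOn lemF (Set.Ioo (-1:ℝ) 1) := by
  apply ContinuousOn.div continuousOn_const
  · exact (Real.continuous_sqrt.comp (by continuity)).continuousOn
  · intro r hr
    have h2 : r ^ 2 < 1 := by nlinarith [hr.1, hr.2]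
    have h1 : r ^ 4 < 1 := by nlinarith [sq_nonneg r, h2]
    exact ne_of_gt (Real.sqrt_pos.mpr (by linarith))

lemma lemF_key {s : ℝ} (hs : s ∈ Set.Ioo (0:ℝ) 1) :
    (-2 * s / ((1 + s ^ 2) ^ 2 * lemG s)) * lemF (lemG s) = -(lemF s) := by
  have h1 : s ^ 2 < 1 := by nlinarith [hs.1, hs.2]
  have h2 : (0:ℝ) < 1 + s ^ 2 := by positivity
  have hg2 : lemG s ^ 2 = (1 - s ^ 2) / (1 + s ^ 2) :=
    lemG_sq ⟨by linarith [hs.1], hs.2.le⟩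
  have hgpos : 0 < lemG s := (lemG_mem hs).1
  have h4 : 1 - lemG s ^ 4 = (2 * s / (1 + s ^ 2)) ^ 2 := by
    have h40 : lemG s ^ 4 = (lemG s ^ 2) ^ 2 := by ring
    rw [h40, hg2]
    field_simp
    ring
  have hsq : Real.sqrt (1 - lemG s ^ 4) = 2 * s / (1 + s ^ 2) := by
    rw [h4, Real.sqrt_sq (div_nonneg (by linarith [hs.1]) h2.le)]
  have hprod : (1 + s ^ 2) * lemG s = Real.sqrt (1 - s ^ 4) := by
    have h14 : 1 - s ^ 4 = ((1 + s ^ 2) * lemG s) ^ 2 := by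
      rw [mul_pow, hg2]
      field_simp
      ring
    rw [h14, Real.sqrt_sq (mul_nonneg h2.le hgpos.le)]
  unfold lemF
  rw [hsq, ← hprod]
  have hs0 : s ≠ 0 := ne_of_gt hs.1
  field_simp

lemma lemF_integrable : IntervalIntegrable lemF MeasureTheory.volume 0 1 := by
  have h1 : IntervalIntegrable (fun x : ℝ => x ^ (-(1/2) : ℝ)) MeasureTheory.volume 0 1 :=
    intervalIntegrable_rpow' (by norm_num)
  have h2 : IntervalIntegrable (fun x : ℝ => (1 - x) ^ (-(1/2) : ℝ))
      MeasureTheory.volume 0 1 := by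
    have := h1.comp_sub_left 1
    norm_num at this
    exact this.symm
  apply h2.mono_fun
  · apply Measurable.aestronglyMeasurable
    apply Measurable.div measurable_const
    exact Real.continuous_sqrt.measurable.comp
      (measurable_const.sub (measurable_id.pow_const 4))
  · rw [Filter.EventuallyLE, ae_restrict_iff' measurableSet_uIoc]
    apply Filter.Eventually.of_forall
    intro x hx
    rw [Set.uIoc_of_le (by norm_num : (0:ℝ) ≤ 1)] at hx
    have hx0 : 0 < x := hx.1
    have hx1 : x ≤ 1 := hx.2
    have h1x : (0:ℝ) ≤ 1 - x := by linarith
    rcases eq_or_lt_of_le hx1 with heq | hlt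
    · subst heq
      simp [lemF, Real.zero_rpow]
    · have h1xpos : (0:ℝ) < 1 - x := by linarith
      have hle4 : x ^ 4 ≤ x := by
        calc x ^ 4 ≤ x ^ 1 := pow_le_pow_of_le_one hx0.le hx1 (by norm_num)
          _ = x := pow_one x
      have hsle : Real.sqrt (1 - x) ≤ Real.sqrt (1 - x ^ 4) :=
        Real.sqrt_le_sqrt (by linarith)
      have hspos : 0 < Real.sqrt (1 - x) := Real.sqrt_pos.mpr h1xpos
      have hrpow : (1 - x) ^ (-(1/2) : ℝ) = 1 / Real.sqrt (1 - x) := by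
        rw [Real.rpow_neg h1x, Real.sqrt_eq_rpow, one_div]
        norm_num
      simp only [lemF, Real.norm_eq_abs]
      rw [hrpow, abs_of_nonneg (by positivity), abs_of_nonneg (by positivity)]
      exact div_le_div_of_nonneg_left one_pos.le hspos hsle

lemma lemG_cont : Continuous lemG := by
  apply Real.continuous_sqrt.comp
  apply Continuous.div (by continuity) (by continuity)
  intro x
  positivity

/-- Substitution identity. -/
lemma lem_sub {u b : ℝ} (hu : u ∈ Set.Ioo (0:ℝ) 1) (hb : b ∈ Set.Ioo (0:ℝ) 1) :
    ∫ s in (lemG b)..(lemG u), lemF s = ∫ r in u..b, lemF r := by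
  set c := lemG b with hc
  set d := lemG u with hd
  have hcm : c ∈ Set.Ioo (0:ℝ) 1 := lemG_mem hb
  have hdm : d ∈ Set.Ioo (0:ℝ) 1 := lemG_mem hu
  have hsub : Set.uIcc c d ⊆ Set.Ioo (0:ℝ) 1 := by
    exact Set.OrdConnected.uIcc_subset Set.ordConnected_Ioo hcm hdm
  have hkey := intervalIntegral.integral_comp_smul_deriv'
    (f := lemG) (f' := fun s => -2 * s / ((1 + s ^ 2) ^ 2 * lemG s)) (g := lemF)
    (a := c) (b := d)
    (fun x hx => lemG_hasDeriv (hsub hx))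
    (by
      apply ContinuousOn.div
      · exact (by continuity : Continuous fun s : ℝ => -2 * s).continuousOn
      · exact ContinuousOn.mul
          (by continuity : Continuous fun s : ℝ => (1 + s ^ 2) ^ 2).continuousOn
          lemG_cont.continuousOn
      · intro x hx
        have hx' := hsub hx
        have hgm := (lemG_mem hx').1
        positivity)
    (by
      apply lemF_contOn.mono
      intro y hy
      obtain ⟨x, hx, rfl⟩ := hy
      have hm := lemG_mem (hsub hx)
      exact ⟨by linarith [hm.1], hm.2⟩)
  have hgc : lemG c = b := lemG_invol ⟨hb.1.le, hb.2.le⟩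
  have hgd : lemG d = u := lemG_invol ⟨hu.1.le, hu.2.le⟩
  rw [hgc, hgd] at hkey
  have hcongr : (∫ x in c..d, (-2 * x / ((1 + x ^ 2) ^ 2 * lemG x)) • (lemF ∘ lemG) x)
      = ∫ x in c..d, -(lemF x) := by
    apply intervalIntegral.integral_congr
    intro x hx
    have hx' := hsub hx
    simpa [Function.comp, smul_eq_mul] using lemF_key hx'
  rw [hcongr, intervalIntegral.integral_neg, intervalIntegral.integral_symm u b] at hkey
  linarith [hkey]

theorem lemniscate_arc_lengths_equal (R : ℝ) (hR : R ∈ Set.Icc (0:ℝ) 1) :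
    ∫ r in (0:ℝ)..Real.sqrt ((1 - R ^ 4) / (1 + R ^ 4)), 1 / Real.sqrt (1 - r ^ 4) =
      ∫ r in (R ^ 2)..1, 1 / Real.sqrt (1 - r ^ 4) := by
  rcases eq_or_lt_of_le hR.1 with h0 | h0
  · -- R = 0
    rw [← h0]
    norm_num
  rcases eq_or_lt_of_le hR.2 with h1 | h1
  · -- R = 1
    rw [h1]
    norm_num
  -- main case 0 < R < 1
  set u := R ^ 2 with hu_def
  have hu : u ∈ Set.Ioo (0:ℝ) 1 := by
    constructor
    · positivity
    · calc u = R ^ 2 := rfl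
        _ < 1 ^ 2 := by gcongr
        _ = 1 := one_pow 2
  have hbound : Real.sqrt ((1 - R ^ 4) / (1 + R ^ 4)) = lemG u := by
    unfold lemG
    have h4 : R ^ 4 = u ^ 2 := by rw [hu_def]; ring
    rw [h4]
  set A := lemG u with hA_def
  have hA : A ∈ Set.Ioo (0:ℝ) 1 := lemG_mem hu
  rw [hbound]
  show ∫ r in (0:ℝ)..A, lemF r = ∫ r in u..1, lemF r
  -- integrability on subintervals
  have hmem01 : ∀ x : ℝ, x ∈ Set.Icc (0:ℝ) 1 → x ∈ Set.uIcc (0:ℝ) 1 := by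
    intro x hx
    rw [Set.uIcc_of_le zero_le_one]
    exact hx
  have hfiuA : IntervalIntegrable lemF MeasureTheory.volume u 1 :=
    lemF_integrable.mono_set
      (Set.uIcc_subset_uIcc (hmem01 u ⟨hu.1.le, hu.2.le⟩) (hmem01 1 ⟨zero_le_one, le_refl 1⟩))
  have hfi0A : IntervalIntegrable lemF MeasureTheory.volume 0 A :=
    lemF_integrable.mono_set
      (Set.uIcc_subset_uIcc (hmem01 0 ⟨le_refl 0, zero_le_one⟩) (hmem01 A ⟨hA.1.le, hA.2.le⟩))
  -- continuity of primitives
  have hcont1 : ContinuousOn (fun b => ∫ x in u..b, lemF x) (Set.uIcc u 1) :=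
    intervalIntegral.continuousOn_primitive_interval' hfiuA Set.left_mem_uIcc
  have hIntOn : IntegrableOn lemF (Set.uIcc 0 A) MeasureTheory.volume := by
    rw [Set.uIcc_of_le hA.1.le]
    exact (intervalIntegrable_iff_integrableOn_Icc_of_le hA.1.le).mp hfi0A
  have hcont2 : ContinuousOn (fun c => ∫ x in c..A, lemF x) (Set.uIcc 0 A) :=
    intervalIntegral.continuousOn_primitive_interval_left hIntOn
  -- limits as b → 1⁻
  have T1 : Tendsto (fun b => ∫ x in u..b, lemF x) (nhdsWithin 1 (Set.Iio 1))
      (nhds (∫ x in u..1, lemF x)) := by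
    rw [← nhdsWithin_Ioo_eq_nhdsLT hu.2]
    exact (hcont1 1 Set.right_mem_uIcc).mono_left
      (nhdsWithin_mono 1 (Set.Ioo_subset_Icc_self.trans (by rw [Set.uIcc_of_le hu.2.le])))
  have hG1 : lemG 1 = 0 := by unfold lemG; norm_num
  have hGt0 : Tendsto lemG (nhdsWithin 1 (Set.Iio 1)) (nhds 0) := by
    have := lemG_cont.tendsto 1
    rw [hG1] at this
    exact this.mono_left nhdsWithin_le_nhds
  have hGt : Tendsto lemG (nhdsWithin 1 (Set.Iio 1)) (nhdsWithin 0 (Set.uIcc 0 A)) := by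
    rw [tendsto_nhdsWithin_iff]
    refine ⟨hGt0, ?_⟩
    have hev : ∀ᶠ b in nhdsWithin 1 (Set.Iio 1), lemG b ∈ Set.Iio A :=
      hGt0.eventually_mem (Iio_mem_nhds hA.1)
    filter_upwards [hev] with b hb
    rw [Set.uIcc_of_le hA.1.le]
    exact ⟨Real.sqrt_nonneg _, le_of_lt hb⟩
  have T2 : Tendsto (fun b => ∫ x in (lemG b)..A, lemF x) (nhdsWithin 1 (Set.Iio 1))
      (nhds (∫ x in (0:ℝ)..A, lemF x)) :=
    (hcont2 0 Set.left_mem_uIcc).tendsto.comp hGt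
  -- eventual equality
  have hev : ∀ᶠ b in nhdsWithin 1 (Set.Iio 1),
      (∫ x in (lemG b)..A, lemF x) = ∫ x in u..b, lemF x := by
    have h01 : Set.Ioo (0:ℝ) 1 ∈ nhdsWithin (1:ℝ) (Set.Iio 1) := by
      rw [← nhdsWithin_Ioo_eq_nhdsLT zero_lt_one]
      exact self_mem_nhdsWithin
    filter_upwards [h01] with b hb
    exact lem_sub hu hb
  exact tendsto_nhds_unique (T2.congr' hev) T1
end

section
/- ∫₀¹ 1/√(1 − x⁴) dx = Γ(1/4)² / (4·√(2π)), where Γ is the Gamma function. -/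
open Real MeasureTheory intervalIntegral

lemma subst_step :
    ∫ x in (0:ℝ)..1, 1 / Real.sqrt (1 - x ^ 4) =
      ∫ u in (0:ℝ)..1, (1/4) * u ^ (-(3/4) : ℝ) * (1 - u) ^ (-(1/2) : ℝ) := by
  have h01 : (0:ℝ) ≤ 1 := by norm_num
  rw [intervalIntegral.integral_of_le h01, intervalIntegral.integral_of_le h01,
    MeasureTheory.integral_Ioc_eq_integral_Ioo, MeasureTheory.integral_Ioc_eq_integral_Ioo]
  have himg : (fun x : ℝ => x ^ 4) '' Set.Ioo 0 1 = Set.Ioo 0 1 := by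
    ext y
    constructor
    · rintro ⟨x, ⟨hx0, hx1⟩, rfl⟩
      exact ⟨by positivity, pow_lt_one₀ hx0.le hx1 (by norm_num)⟩
    · rintro ⟨hy0, hy1⟩
      refine ⟨y ^ ((1:ℝ)/4), ⟨by positivity, ?_⟩, ?_⟩
      · exact Real.rpow_lt_one hy0.le hy1 (by norm_num)
      · show (y ^ ((1:ℝ)/4)) ^ (4:ℕ) = y
        rw [← Real.rpow_natCast (y ^ ((1:ℝ)/4)) 4, ← Real.rpow_mul hy0.le]
        norm_num
  have key := MeasureTheory.integral_image_eq_integral_abs_deriv_smul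
    (measurableSet_Ioo (a := (0:ℝ)) (b := 1))
    (f := fun x => x ^ 4) (f' := fun x => 4 * x ^ 3)
    (fun x _ => by
      have : HasDerivAt (fun x : ℝ => x ^ 4) (4 * x ^ 3) x := by
        simpa using (hasDerivAt_pow 4 x)
      exact this.hasDerivWithinAt)
    (fun a ha b hb hab => by
      simp only at hab
      rcases lt_trichotomy a b with h | h | h
      · exact absurd hab (by have := pow_lt_pow_left₀ h ha.1.le (by norm_num : 4 ≠ 0); linarith)
      · exact h
      · exact absurd hab (by have := pow_lt_pow_left₀ h hb.1.le (by norm_num : 4 ≠ 0); linarith))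
    (fun u => (1/4) * u ^ (-(3/4) : ℝ) * (1 - u) ^ (-(1/2) : ℝ))
  rw [himg] at key
  rw [key]
  apply MeasureTheory.setIntegral_congr_fun measurableSet_Ioo
  intro x ⟨hx0, hx1⟩
  have hx4 : (0:ℝ) < 1 - x ^ 4 := sub_pos.mpr (pow_lt_one₀ hx0.le hx1 (by norm_num))
  dsimp only
  rw [smul_eq_mul]
  have h1 : ((x:ℝ) ^ 4) ^ (-(3/4) : ℝ) = x ^ (-3 : ℝ) := by
    rw [← Real.rpow_natCast x 4, ← Real.rpow_mul hx0.le]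
    norm_num
  have h2 : ((1:ℝ) - x ^ 4) ^ (-(1/2) : ℝ) = 1 / Real.sqrt (1 - x ^ 4) := by
    rw [Real.rpow_neg hx4.le, Real.sqrt_eq_rpow, one_div, one_div]
  rw [h1, h2, abs_of_pos (by positivity)]
  rw [show ((-3:ℝ)) = ((-3 : ℤ):ℝ) by norm_num, Real.rpow_intCast]
  have hx3 : x ^ (3:ℕ) ≠ 0 := by positivity
  rw [zpow_neg, show ((3:ℤ)) = ((3:ℕ):ℤ) by norm_num, zpow_natCast]
  field_simp

lemma beta_step :
    Real.Gamma (3/4) * ∫ u in (0:ℝ)..1, u ^ (-(3/4) : ℝ) * (1 - u) ^ (-(1/2) : ℝ) =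
      Real.Gamma (1/4) * Real.Gamma (1/2) := by
  have hB : Complex.betaIntegral (1/4) (1/2) =
      ((∫ u in (0:ℝ)..1, u ^ (-(3/4) : ℝ) * (1 - u) ^ (-(1/2) : ℝ) : ℝ) : ℂ) := by
    rw [Complex.betaIntegral, ← intervalIntegral.integral_ofReal]
    apply intervalIntegral.integral_congr
    intro x hx
    rw [Set.uIcc_of_le (by norm_num : (0:ℝ) ≤ 1)] at hx
    obtain ⟨hx0, hx1⟩ := hx
    dsimp only
    rw [Complex.ofReal_mul, Complex.ofReal_cpow hx0, Complex.ofReal_cpow (by linarith)]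
    push_cast
    norm_num
  have hGamma := Complex.Gamma_mul_Gamma_eq_betaIntegral
    (s := 1/4) (t := 1/2) (by norm_num) (by norm_num)
  rw [hB] at hGamma
  norm_num at hGamma
  have c14 : ((1:ℂ)/4) = ((1/4 : ℝ) : ℂ) := by norm_num
  have c12 : ((1:ℂ)/2) = ((1/2 : ℝ) : ℂ) := by norm_num
  have c34 : ((3:ℂ)/4) = ((3/4 : ℝ) : ℂ) := by norm_num
  rw [c14, c12, c34, Complex.Gamma_ofReal, Complex.Gamma_ofReal, Complex.Gamma_ofReal,
    ← Complex.ofReal_mul, ← Complex.ofReal_mul] at hGamma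
  exact_mod_cast hGamma.symm

theorem lemniscate_integral_eq_gamma :
    ∫ x in (0:ℝ)..1, 1 / Real.sqrt (1 - x ^ 4) =
      Real.Gamma (1 / 4) ^ 2 / (4 * Real.sqrt (2 * π)) := by
  have h34 : (0:ℝ) < Real.Gamma (3/4) := Real.Gamma_pos_of_pos (by norm_num)
  have h14 : (0:ℝ) < Real.Gamma (1/4) := Real.Gamma_pos_of_pos (by norm_num)
  have hrefl := Real.Gamma_mul_Gamma_one_sub (1/4)
  rw [show (1:ℝ) - 1/4 = 3/4 by norm_num] at hrefl
  rw [show π * (1/4) = π/4 by ring, Real.sin_pi_div_four] at hrefl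
  have hI := beta_step
  have hhalf : Real.Gamma (1/2) = Real.sqrt π := Real.Gamma_one_half_eq
  have hsub : ∫ x in (0:ℝ)..1, 1 / Real.sqrt (1 - x ^ 4) =
      (1/4) * ∫ u in (0:ℝ)..1, u ^ (-(3/4) : ℝ) * (1 - u) ^ (-(1/2) : ℝ) := by
    rw [subst_step, ← intervalIntegral.integral_const_mul]
    congr 1
    ext u
    ring
  rw [hsub]
  have hIval : ∫ u in (0:ℝ)..1, u ^ (-(3/4) : ℝ) * (1 - u) ^ (-(1/2) : ℝ) =
      Real.Gamma (1/4) * Real.sqrt π / Real.Gamma (3/4) := by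
    rw [← hhalf]
    field_simp at hI ⊢
    linarith [hI]
  rw [hIval]
  have hg34 : Real.Gamma (3/4) = Real.sqrt 2 * π / Real.Gamma (1/4) := by
    have h22 : Real.sqrt 2 * Real.sqrt 2 = 2 := Real.mul_self_sqrt (by norm_num)
    have h2 : Real.sqrt 2 > 0 := by positivity
    field_simp at hrefl ⊢
    linear_combination (Real.sqrt 2 / 2) * hrefl -
      (Real.Gamma (1/4) * Real.Gamma (3/4) / 2) * h22
  rw [hg34]
  have hπ : (0:ℝ) < π := Real.pi_pos
  have hs2 : (0:ℝ) < Real.sqrt 2 := by positivity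
  have hsπ : (0:ℝ) < Real.sqrt π := Real.sqrt_pos.mpr hπ
  have h2π : Real.sqrt (2 * π) = Real.sqrt 2 * Real.sqrt π := Real.sqrt_mul (by norm_num) _
  rw [h2π]
  have hππ : Real.sqrt π * Real.sqrt π = π := Real.mul_self_sqrt hπ.le
  field_simp
  linear_combination hππ
end
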